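/- Let X and Y be Banach spaces with shrinking Schauder decompositions that are C-finitely Fredholm equivalent via operators (L_n), (R_n). For A ∈ HA₀₀(X) with A = P_m A P_m, the operator φ_n(A) = L_n A R_n satisfies: φ_n(A) − φ_m(A) is compact for all n ≥ m, and if also B = P_n B P_n then φ_n(AB) − φ_n(A)φ_n(B) is compact. -/
import Mathlib


open Filter Topology

/-- Let `X`, `Y` have shrinking Schauder decompositions that are `C`-finitely
Fredholm equivalent via `(L n)`, `(R n)`.  For `A ∈ HA₀₀(X)` with `A = P m A P m`, the
operators `φ_n(A) = L n ∘ A ∘ R n` satisfy: `φ_n(A) − φ_m(A)` is compact for all `n ≥ m`,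
and if also `B = P n B P n` then `φ_n(A B) − φ_n(A) φ_n(B)` is compact. -/
theorem stmt17 (X Y : Type*) [NormedAddCommGroup X] [NormedSpace ℂ X] [CompleteSpace X]
    [NormedAddCommGroup Y] [NormedSpace ℂ Y] [CompleteSpace Y]
    (P : ℕ → X →L[ℂ] X) (Q : ℕ → Y →L[ℂ] Y)
    (hP_proj : ∀ m n, (P m).comp (P n) = P (min m n))
    (hP_lim : ∀ x : X, Tendsto (fun n => P n x) atTop (𝓝 x))
    (hQ_proj : ∀ m n, (Q m).comp (Q n) = Q (min m n))
    (hQ_lim : ∀ y : Y, Tendsto (fun n => Q n y) atTop (𝓝 y))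
    (hP_shr : Dense (⋃ n, Set.range fun f : X →L[ℂ] ℂ => f.comp (P n)))
    (hQ_shr : Dense (⋃ n, Set.range fun f : Y →L[ℂ] ℂ => f.comp (Q n)))
    (C : ℝ) (hC : 1 ≤ C)
    (L : ℕ → X →L[ℂ] Y) (R : ℕ → Y →L[ℂ] X)
    (hLbdd : BddAbove (Set.range fun n => ‖L n‖))
    (hRbdd : BddAbove (Set.range fun n => ‖R n‖))
    (hbound : (⨆ n, ‖L n‖) * (⨆ n, ‖R n‖) ≤ C)
    (hcompat : ∀ m n, m ≤ n →
      IsCompactOperator ⇑(L m - (L n).comp (P m)) ∧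
      IsCompactOperator ⇑(L m - (Q m).comp (L n)) ∧
      IsCompactOperator ⇑(R m - (R n).comp (Q m)) ∧
      IsCompactOperator ⇑(R m - (P m).comp (R n)))
    (hfred : ∀ n, IsCompactOperator ⇑((R n).comp (L n) - P n) ∧
      IsCompactOperator ⇑((L n).comp (R n) - Q n))
    (m : ℕ) (A : X →L[ℂ] X) (hA : A = ((P m).comp A).comp (P m)) :
    (∀ n, m ≤ n →
      IsCompactOperator
        ⇑(((L n).comp (A.comp (R n))) - ((L m).comp (A.comp (R m))))) ∧
    (∀ n, m ≤ n → ∀ B : X →L[ℂ] X, B = ((P n).comp B).comp (P n) →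
      IsCompactOperator
        ⇑(((L n).comp ((A.comp B).comp (R n))) -
          ((L n).comp (A.comp (R n))).comp ((L n).comp (B.comp (R n))))) := by
  have hPP : ∀ k (x : X), P k (P k x) = P k x := by
    intro k x
    have := congrArg (fun T : X →L[ℂ] X => T x) (hP_proj k k)
    simpa using this
  constructor
  · intro n hn
    obtain ⟨h1, -, -, h4⟩ := hcompat m n hn
    have key : ((L n).comp (A.comp (R n))) - ((L m).comp (A.comp (R m)))
        = (((L n).comp (P m) - L m).comp (A.comp ((P m).comp (R n))))
          + ((L m).comp (A.comp ((P m).comp (R n) - R m))) := by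
      ext x
      simp only [ContinuousLinearMap.sub_apply, ContinuousLinearMap.add_apply,
        ContinuousLinearMap.comp_apply]
      rw [hA]
      simp only [ContinuousLinearMap.comp_apply, ContinuousLinearMap.sub_apply,
        map_sub, hPP]
      abel
    rw [key]
    have c1 : IsCompactOperator ⇑((L n).comp (P m) - L m) := by
      have := h1.neg; simpa using this
    have c4 : IsCompactOperator ⇑((P m).comp (R n) - R m) := by
      have := h4.neg; simpa using this
    have t1 : IsCompactOperator
        ⇑((((L n).comp (P m) - L m)).comp (A.comp ((P m).comp (R n)))) := by
      rw [ContinuousLinearMap.coe_comp']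
      exact c1.comp_clm _
    have t2 : IsCompactOperator
        ⇑((L m).comp (A.comp ((P m).comp (R n) - R m))) := by
      have h : IsCompactOperator ⇑(A.comp ((P m).comp (R n) - R m)) := by
        rw [ContinuousLinearMap.coe_comp']
        exact c4.clm_comp A
      rw [ContinuousLinearMap.coe_comp']
      exact h.clm_comp (L m)
    rw [ContinuousLinearMap.coe_add']
    exact t1.add t2
  · intro n hn B hB
    obtain ⟨hf1, -⟩ := hfred n
    have key : (((L n).comp ((A.comp B).comp (R n))) -
          ((L n).comp (A.comp (R n))).comp ((L n).comp (B.comp (R n))))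
        = (L n).comp ((A.comp ((P n - (R n).comp (L n)).comp (B.comp (R n))))) := by
      ext x
      rw [hB]
      simp only [ContinuousLinearMap.sub_apply, ContinuousLinearMap.comp_apply,
        map_sub, hPP]
    rw [key]
    have c : IsCompactOperator ⇑(P n - (R n).comp (L n)) := by
      have := hf1.neg; simpa using this
    have t : IsCompactOperator ⇑((P n - (R n).comp (L n)).comp (B.comp (R n))) := by
      rw [ContinuousLinearMap.coe_comp']
      exact c.comp_clm _
    have t2 : IsCompactOperator ⇑(A.comp ((P n - (R n).comp (L n)).comp (B.comp (R n)))) := by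
      rw [ContinuousLinearMap.coe_comp']; exact t.clm_comp A
    rw [ContinuousLinearMap.coe_comp']
    exact t2.clm_comp (L n)
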